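/- Let G be a finite simple graph with vertex set V(G) = {v_1, …, v_n} and let 1 < k < n. Suppose that: (1) N[v_1] ∪ … ∪ N[v_k] = V(G); (2) N[v_1] ∩ (N[v_2] ∪ … ∪ N[v_k]) = ∅; (3) |d(v_i) − d(v_j)| ≠ 1 for every i ∈ {1,…,k} and every j ∈ {1,…,n} with j ≠ i; (4) v_1 is the unique vertex of G of degree d(v_1); (5) for every i ∈ {2,…,k}, every vertex of G having degree d(v_i) lies in {v_2,…,v_k}. Let G' be a finite simple graph with vertex set V(G') = {v'_1, …, v'_n} such that for every j ∈ {1,…,n} the vertex-deleted subgraph G − v_j is isomorphic to G' − v'_j. Then N[v'_1] ∩ (N[v'_2] ∪ … ∪ N[v'_k]) = ∅, where the closed neighborhoods are taken in G'. -/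

import Mathlib

open Finset SimpleGraph

lemma hosaka_degree_induce_card {n : ℕ} (G : SimpleGraph (Fin n)) [DecidableRel G.Adj] (u : Fin n)
    (y : ({u}ᶜ : Set (Fin n))) :
    (G.induce ({u}ᶜ : Set (Fin n))).degree y = ((G.neighborFinset (y : Fin n)).erase u).card := by
  rw [← card_neighborFinset_eq_degree]
  refine Finset.card_bij (fun z _ => (z : Fin n)) ?_ ?_ ?_
  · intro z hz
    rw [mem_neighborFinset] at hz
    rw [mem_erase, mem_neighborFinset]
    exact ⟨z.2, hz⟩
  · intro a _ b _ h; exact Subtype.ext h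
  · intro b hb
    rw [mem_erase, mem_neighborFinset] at hb
    exact ⟨⟨b, hb.1⟩, by rw [mem_neighborFinset]; exact hb.2, rfl⟩

lemma hosaka_degree_induce {n : ℕ} (G : SimpleGraph (Fin n)) [DecidableRel G.Adj] (u : Fin n)
    (y : ({u}ᶜ : Set (Fin n))) :
    ((G.induce ({u}ᶜ : Set (Fin n))).degree y : ℤ)
      = G.degree (y : Fin n) - (if G.Adj u (y : Fin n) then 1 else 0) := by
  rw [hosaka_degree_induce_card, ← card_neighborFinset_eq_degree]
  by_cases h : G.Adj u (y : Fin n)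
  · have hu : u ∈ G.neighborFinset (y : Fin n) := by rw [mem_neighborFinset]; exact h.symm
    rw [Finset.card_erase_of_mem hu, if_pos h]
    have : 1 ≤ (G.neighborFinset (y : Fin n)).card := Finset.card_pos.mpr ⟨u, hu⟩
    omega
  · have hu : u ∉ G.neighborFinset (y : Fin n) := by rw [mem_neighborFinset]; exact fun hc => h hc.symm
    rw [Finset.erase_eq_of_notMem hu, if_neg h]; ring

lemma hosaka_sum_ite_adj {n : ℕ} (G : SimpleGraph (Fin n)) [DecidableRel G.Adj] (u : Fin n) :
    (∑ x : Fin n, (if G.Adj u x then (1:ℤ) else 0)) = G.degree u := by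
  rw [Finset.sum_boole, ← card_neighborFinset_eq_degree, neighborFinset_eq_filter]

lemma hosaka_sum_degree_induce {n : ℕ} (G : SimpleGraph (Fin n)) [DecidableRel G.Adj] (u : Fin n) :
    (∑ y : ({u}ᶜ : Set (Fin n)), ((G.induce ({u}ᶜ : Set (Fin n))).degree y : ℤ))
      = (∑ x : Fin n, (G.degree x : ℤ)) - 2 * G.degree u := by
  have h1 : (∑ y : ({u}ᶜ : Set (Fin n)), ((G.induce ({u}ᶜ : Set (Fin n))).degree y : ℤ))
      = ∑ y : ({u}ᶜ : Set (Fin n)),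
        ((G.degree (y : Fin n) : ℤ) - (if G.Adj u (y : Fin n) then 1 else 0)) := by
    exact Finset.sum_congr rfl fun y _ => hosaka_degree_induce G u y
  rw [h1]
  rw [Finset.sum_set_coe (f := fun x : Fin n => ((G.degree x : ℤ) - if G.Adj u x then 1 else 0))]
  have h2 : ({u}ᶜ : Set (Fin n)).toFinset = ({u} : Finset (Fin n))ᶜ := by
    simp
  rw [h2, Finset.sum_sub_distrib]
  have h3 : ∑ x ∈ ({u} : Finset (Fin n))ᶜ, (G.degree x : ℤ)
      = (∑ x : Fin n, (G.degree x : ℤ)) - G.degree u := by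
    have := Finset.sum_compl_add_sum ({u} : Finset (Fin n)) (fun x => (G.degree x : ℤ))
    simp at this ⊢; linarith
  have h4 : ∑ x ∈ ({u} : Finset (Fin n))ᶜ, (if G.Adj u x then (1:ℤ) else 0)
      = G.degree u := by
    have := Finset.sum_compl_add_sum ({u} : Finset (Fin n)) (fun x => if G.Adj u x then (1:ℤ) else 0)
    have h5 : ∑ i ∈ ({u} : Finset (Fin n)), (if G.Adj u i then (1:ℤ) else 0) = 0 := by
      rw [Finset.sum_singleton, if_neg (G.loopless.irrefl u)]
    rw [← hosaka_sum_ite_adj G u, ← this, h5, add_zero]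
  rw [h3, h4]; ring

lemma hosaka_iso_degree {V W : Type*} [Fintype V] [Fintype W] (G : SimpleGraph V) (G' : SimpleGraph W)
    [DecidableRel G.Adj] [DecidableRel G'.Adj] (φ : G ≃g G') (v : V) :
    G'.degree (φ v) = G.degree v := by
  rw [← SimpleGraph.card_neighborSet_eq_degree, ← SimpleGraph.card_neighborSet_eq_degree]
  exact Fintype.card_congr (φ.mapNeighborSet v).symm

lemma hosaka_deck_sum_eq {n : ℕ} (G G' : SimpleGraph (Fin n)) [DecidableRel G.Adj] [DecidableRel G'.Adj]
    (u : Fin n) (φ : G.induce ({u}ᶜ : Set (Fin n)) ≃g G'.induce ({u}ᶜ : Set (Fin n))) :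
    (∑ y : ({u}ᶜ : Set (Fin n)), ((G.induce ({u}ᶜ : Set (Fin n))).degree y : ℤ))
      = ∑ y : ({u}ᶜ : Set (Fin n)), ((G'.induce ({u}ᶜ : Set (Fin n))).degree y : ℤ) := by
  rw [← Equiv.sum_comp φ.toEquiv
    (fun y => ((G'.induce ({u}ᶜ : Set (Fin n))).degree y : ℤ))]
  exact Finset.sum_congr rfl fun y _ => by
    exact_mod_cast (hosaka_iso_degree _ _ φ y).symm

lemma hosaka_deck_degree_eq {n : ℕ} (hn : 3 ≤ n) (G G' : SimpleGraph (Fin n))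
    [DecidableRel G.Adj] [DecidableRel G'.Adj]
    (hdel : ∀ j : Fin n,
      Nonempty (G.induce ({j}ᶜ : Set (Fin n)) ≃g G'.induce ({j}ᶜ : Set (Fin n))))
    (u : Fin n) : G'.degree u = G.degree u := by
  have key : ∀ w : Fin n, (∑ x : Fin n, (G.degree x : ℤ)) - 2 * G.degree w
      = (∑ x : Fin n, (G'.degree x : ℤ)) - 2 * G'.degree w := by
    intro w
    obtain ⟨φ⟩ := hdel w
    rw [← hosaka_sum_degree_induce G w, ← hosaka_sum_degree_induce G' w]
    exact hosaka_deck_sum_eq G G' w φ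
  have hTT : (∑ x : Fin n, (G.degree x : ℤ)) = ∑ x : Fin n, (G'.degree x : ℤ) := by
    have hsum := Finset.sum_congr rfl fun w (_ : w ∈ Finset.univ) => key w
    simp only [Finset.sum_sub_distrib, Finset.sum_const, Finset.card_univ,
      Fintype.card_fin, nsmul_eq_mul, ← Finset.mul_sum] at hsum
    have hn' : (3 : ℤ) ≤ (n : ℤ) := by exact_mod_cast hn
    nlinarith [hsum]
  have := key u
  rw [hTT] at this
  omega

lemma hosaka_card_deg_rel {n : ℕ} (G G' : SimpleGraph (Fin n))
    [DecidableRel G.Adj] [DecidableRel G'.Adj]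
    (hd : ∀ x, G'.degree x = G.degree x) (u : Fin n)
    (φ : G.induce ({u}ᶜ : Set (Fin n)) ≃g G'.induce ({u}ᶜ : Set (Fin n)))
    (y : ({u}ᶜ : Set (Fin n))) :
    ((G.degree (y : Fin n) : ℤ) - if G.Adj u (y : Fin n) then 1 else 0)
      = (G.degree ((φ y : ({u}ᶜ : Set (Fin n))) : Fin n) : ℤ)
        - if G'.Adj u ((φ y : ({u}ᶜ : Set (Fin n))) : Fin n) then 1 else 0 := by
  have e1 := hosaka_degree_induce G u y
  have e2 := hosaka_degree_induce G' u (φ y)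
  have e3 := hosaka_iso_degree _ _ φ y
  rw [hd] at e2
  rw [← e1, ← e2, e3]


/-- Lemma 1 of Hosaka's paper: under hypotheses (1)–(5) and the isomorphisms of
vertex-deleted subgraphs, `N[v'_1] ∩ (N[v'_2] ∪ … ∪ N[v'_k]) = ∅` in `G'`.
Vertices are indexed by `Fin n`, with `v_j` (resp. `v'_j`) corresponding to
index `⟨j-1, _⟩`. -/
theorem stmt_2 (n k : ℕ) (hk1 : 1 < k) (hkn : k < n)
    (G G' : SimpleGraph (Fin n)) [DecidableRel G.Adj] [DecidableRel G'.Adj]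
    -- (1) N[v_1] ∪ … ∪ N[v_k] = V(G)
    (h1 : (⋃ i ∈ {i : Fin n | (i : ℕ) < k},
        insert i (G.neighborSet i)) = Set.univ)
    -- (2) N[v_1] ∩ (N[v_2] ∪ … ∪ N[v_k]) = ∅
    (h2 : insert (⟨0, by omega⟩ : Fin n) (G.neighborSet ⟨0, by omega⟩) ∩
        (⋃ i ∈ {i : Fin n | 0 < (i : ℕ) ∧ (i : ℕ) < k},
          insert i (G.neighborSet i)) = ∅)
    -- (3) |d(v_i) − d(v_j)| ≠ 1 for i ∈ {1,…,k}, j ≠ i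
    (h3 : ∀ i j : Fin n, (i : ℕ) < k → j ≠ i →
        |(G.degree i : ℤ) - (G.degree j : ℤ)| ≠ 1)
    -- (4) v_1 is the unique vertex of degree d(v_1)
    (h4 : ∀ w : Fin n, G.degree w = G.degree ⟨0, by omega⟩ → w = ⟨0, by omega⟩)
    -- (5) every vertex of degree d(v_i), i ∈ {2,…,k}, lies in {v_2,…,v_k}
    (h5 : ∀ i : Fin n, 0 < (i : ℕ) → (i : ℕ) < k →
        ∀ w : Fin n, G.degree w = G.degree i → 0 < (w : ℕ) ∧ (w : ℕ) < k)
    -- G − v_j ≅ G' − v'_j for every j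
    (hdel : ∀ j : Fin n,
        Nonempty (G.induce ({j}ᶜ : Set (Fin n)) ≃g G'.induce ({j}ᶜ : Set (Fin n)))) :
    insert (⟨0, by omega⟩ : Fin n) (G'.neighborSet ⟨0, by omega⟩) ∩
        (⋃ i ∈ {i : Fin n | 0 < (i : ℕ) ∧ (i : ℕ) < k},
          insert i (G'.neighborSet i)) = ∅ := by
  have hn3 : 3 ≤ n := by omega
  set v0 : Fin n := ⟨0, by omega⟩ with hv0def
  -- degrees agree between G and G'
  have hd : ∀ x, G'.degree x = G.degree x := hosaka_deck_degree_eq hn3 G G' hdel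
  -- h3 without absolute values
  have key3 : ∀ i j : Fin n, (i : ℕ) < k → j ≠ i →
      (G.degree j : ℤ) - G.degree i ≠ 1 ∧ (G.degree i : ℤ) - G.degree j ≠ 1 := by
    intro i j hi hij
    have h := h3 i j hi hij
    constructor <;> intro e <;> apply h
    · rw [show (G.degree i : ℤ) - G.degree j = -1 by omega]; norm_num
    · rw [e]; norm_num
  have hv0k : (v0 : ℕ) < k := by simp [hv0def]; omega
  -- consequences of h2 in G
  have hG2 : ∀ z : Fin n, (z = v0 ∨ G.Adj v0 z) →
      ∀ s : Fin n, 0 < (s : ℕ) → (s : ℕ) < k → z ≠ s ∧ ¬ G.Adj s z := by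
    intro z hz s hs1 hs2
    have hzmem : z ∈ insert v0 (G.neighborSet v0) := by
      rcases hz with h | h
      · exact h ▸ Set.mem_insert _ _
      · exact Set.mem_insert_of_mem _ h
    constructor
    · intro he
      have : z ∈ (⋃ i ∈ {i : Fin n | 0 < (i : ℕ) ∧ (i : ℕ) < k},
          insert i (G.neighborSet i)) := by
        refine Set.mem_biUnion ⟨hs1, hs2⟩ ?_
        rw [he]; exact Set.mem_insert _ _
      have : z ∈ (∅ : Set (Fin n)) := h2 ▸ Set.mem_inter hzmem this
      exact this.elim
    · intro ha
      have : z ∈ (⋃ i ∈ {i : Fin n | 0 < (i : ℕ) ∧ (i : ℕ) < k},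
          insert i (G.neighborSet i)) :=
        Set.mem_biUnion ⟨hs1, hs2⟩ (Set.mem_insert_of_mem _ ha)
      have : z ∈ (∅ : Set (Fin n)) := h2 ▸ Set.mem_inter hzmem this
      exact this.elim
  -- Step C: adjacency to v0 is the same in G and G'
  have hadj0 : ∀ w : Fin n, G'.Adj w v0 ↔ G.Adj w v0 := by
    intro w
    by_cases hw : w = v0
    · subst hw; simp
    obtain ⟨φ⟩ := hdel w
    have hv0mem : v0 ∈ ({w}ᶜ : Set (Fin n)) := by simp [Ne.symm hw]
    set y0 : ({w}ᶜ : Set (Fin n)) := ⟨v0, hv0mem⟩ with hy0def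
    have rel := hosaka_card_deg_rel G G' hd w φ y0
    have hfix : ((φ y0 : ({w}ᶜ : Set (Fin n))) : Fin n) = v0 := by
      by_contra hne
      have hk3 := key3 v0 ((φ y0 : ({w}ᶜ : Set (Fin n))) : Fin n) hv0k hne
      have hne' : G.degree ((φ y0 : ({w}ᶜ : Set (Fin n))) : Fin n) ≠ G.degree v0 :=
        fun he => hne (h4 _ he)
      have : ((y0 : ({w}ᶜ : Set (Fin n))) : Fin n) = v0 := rfl
      rw [this] at rel
      split_ifs at rel <;> omega
    rw [show ((y0 : ({w}ᶜ : Set (Fin n))) : Fin n) = v0 from rfl, hfix] at rel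
    constructor <;> intro h
    · by_contra hc
      rw [if_pos h, if_neg hc] at rel; omega
    · by_contra hc
      rw [if_pos h, if_neg hc] at rel; omega
  -- Step D: for any u, the number of S-neighbors of u agrees in G and G'
  have hScount : ∀ u : Fin n,
      (∑ y ∈ Finset.univ.filter
          (fun y : ({u}ᶜ : Set (Fin n)) => 0 < ((y : Fin n) : ℕ) ∧ ((y : Fin n) : ℕ) < k),
        (if G.Adj u (y : Fin n) then (1:ℤ) else 0))
      = ∑ y ∈ Finset.univ.filter
          (fun y : ({u}ᶜ : Set (Fin n)) => 0 < ((y : Fin n) : ℕ) ∧ ((y : Fin n) : ℕ) < k),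
        (if G'.Adj u (y : Fin n) then (1:ℤ) else 0) := by
    intro u
    obtain ⟨φ⟩ := hdel u
    -- membership preservation
    have hmem : ∀ y : ({u}ᶜ : Set (Fin n)),
        (0 < ((y : Fin n) : ℕ) ∧ ((y : Fin n) : ℕ) < k) →
        (0 < (((φ y : ({u}ᶜ : Set (Fin n))) : Fin n) : ℕ) ∧
          (((φ y : ({u}ᶜ : Set (Fin n))) : Fin n) : ℕ) < k) := by
      intro y hy
      by_cases hzy : ((φ y : ({u}ᶜ : Set (Fin n))) : Fin n) = (y : Fin n)
      · rw [hzy]; exact hy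
      have rel := hosaka_card_deg_rel G G' hd u φ y
      have hk3 := key3 (y : Fin n) _ hy.2 hzy
      have heq : G.degree ((φ y : ({u}ᶜ : Set (Fin n))) : Fin n) = G.degree (y : Fin n) := by
        split_ifs at rel <;> omega
      exact h5 _ hy.1 hy.2 _ heq
    have hmem' : ∀ z : ({u}ᶜ : Set (Fin n)),
        (0 < ((z : Fin n) : ℕ) ∧ ((z : Fin n) : ℕ) < k) →
        (0 < (((φ.symm z : ({u}ᶜ : Set (Fin n))) : Fin n) : ℕ) ∧
          (((φ.symm z : ({u}ᶜ : Set (Fin n))) : Fin n) : ℕ) < k) := by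
      intro z hz
      set y : ({u}ᶜ : Set (Fin n)) := φ.symm z with hydef
      have hzy : (φ y : ({u}ᶜ : Set (Fin n))) = z := by
        rw [hydef]; exact φ.apply_symm_apply z
      by_cases hyz : ((y : Fin n)) = (z : Fin n)
      · rw [hyz]; exact hz
      have rel := hosaka_card_deg_rel G G' hd u φ y
      rw [hzy] at rel
      have hk3 := key3 (z : Fin n) (y : Fin n) hz.2 hyz
      have heq : G.degree (y : Fin n) = G.degree (z : Fin n) := by
        split_ifs at rel <;> omega
      exact h5 _ hz.1 hz.2 _ heq
    -- the sums of card-degrees over the S-class agree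
    have hsum : ∑ y ∈ Finset.univ.filter
          (fun y : ({u}ᶜ : Set (Fin n)) => 0 < ((y : Fin n) : ℕ) ∧ ((y : Fin n) : ℕ) < k),
        ((G.degree (y : Fin n) : ℤ) - if G.Adj u (y : Fin n) then 1 else 0)
        = ∑ y ∈ Finset.univ.filter
          (fun y : ({u}ᶜ : Set (Fin n)) => 0 < ((y : Fin n) : ℕ) ∧ ((y : Fin n) : ℕ) < k),
        ((G.degree (y : Fin n) : ℤ) - if G'.Adj u (y : Fin n) then 1 else 0) := by
      refine Finset.sum_bij (fun y _ => φ y) ?_ ?_ ?_ ?_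
      · intro y hy
        rw [Finset.mem_filter] at hy ⊢
        exact ⟨Finset.mem_univ _, hmem y hy.2⟩
      · intro a _ b _ h
        exact φ.injective h
      · intro z hz
        rw [Finset.mem_filter] at hz
        refine ⟨φ.symm z, ?_, φ.apply_symm_apply z⟩
        rw [Finset.mem_filter]
        exact ⟨Finset.mem_univ _, hmem' z hz.2⟩
      · intro y _
        exact hosaka_card_deg_rel G G' hd u φ y
    rw [Finset.sum_sub_distrib, Finset.sum_sub_distrib] at hsum
    omega
  -- Final argument
  rw [Set.eq_empty_iff_forall_notMem]
  intro x hx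
  obtain ⟨hx1, hx2⟩ := hx
  simp only [Set.mem_iUnion, Set.mem_setOf_eq, exists_prop] at hx2
  obtain ⟨s, ⟨hs1, hs2⟩, hxs⟩ := hx2
  -- x ∈ N_G'[v0] translates to N_G[v0]
  have hx1' : x = v0 ∨ G'.Adj v0 x := by
    rcases hx1 with h | h
    · exact Or.inl h
    · exact Or.inr h
  have hx1G : x = v0 ∨ G.Adj v0 x := by
    rcases hx1' with h | h
    · exact Or.inl h
    · exact Or.inr (((hadj0 x).mp h.symm).symm)
  have hGfacts := hG2 x hx1G s hs1 hs2
  have hxs' : x = s ∨ G'.Adj s x := by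
    rcases hxs with h | h
    · exact Or.inl h
    · exact Or.inr h
  have hadj's : G'.Adj s x := by
    rcases hxs' with h | h
    · exact absurd h hGfacts.1
    · exact h
  have hxv0 : x ≠ v0 := by
    intro he
    subst he
    exact hGfacts.2 ((hadj0 s).mp hadj's)
  -- apply step D at u = x
  have hcount := hScount x
  have hsx : s ∈ ({x}ᶜ : Set (Fin n)) := by
    simp [Ne.symm hGfacts.1]
  have hL : (∑ y ∈ Finset.univ.filter
      (fun y : ({x}ᶜ : Set (Fin n)) => 0 < ((y : Fin n) : ℕ) ∧ ((y : Fin n) : ℕ) < k),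
      (if G.Adj x (y : Fin n) then (1:ℤ) else 0)) = 0 := by
    refine Finset.sum_eq_zero ?_
    intro y hy
    rw [Finset.mem_filter] at hy
    have := (hG2 x hx1G (y : Fin n) hy.2.1 hy.2.2).2
    rw [if_neg (fun hc => this hc.symm)]
  have hR : (1:ℤ) ≤ ∑ y ∈ Finset.univ.filter
      (fun y : ({x}ᶜ : Set (Fin n)) => 0 < ((y : Fin n) : ℕ) ∧ ((y : Fin n) : ℕ) < k),
      (if G'.Adj x (y : Fin n) then (1:ℤ) else 0) := by
    have hsmem : (⟨s, hsx⟩ : ({x}ᶜ : Set (Fin n))) ∈ Finset.univ.filter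
        (fun y : ({x}ᶜ : Set (Fin n)) => 0 < ((y : Fin n) : ℕ) ∧ ((y : Fin n) : ℕ) < k) := by
      rw [Finset.mem_filter]
      exact ⟨Finset.mem_univ _, hs1, hs2⟩
    have hterm : (if G'.Adj x ((⟨s, hsx⟩ : ({x}ᶜ : Set (Fin n))) : Fin n) then (1:ℤ) else 0) = 1 :=
      if_pos hadj's.symm
    calc (1:ℤ) = _ := hterm.symm
    _ ≤ _ := Finset.single_le_sum
      (f := fun y : ({x}ᶜ : Set (Fin n)) => if G'.Adj x (y : Fin n) then (1:ℤ) else 0)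
      (fun i _ => by split_ifs <;> norm_num) hsmem
  rw [hL] at hcount
  omega
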